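/- For every integer k ≥ 1 there exist a constant 𝒞_k > 0, a constant C > 0, and a threshold X₀ such that for all integers X ≥ X₀ and 1 ≤ H ≤ X: (1/X) · ∑_{x=1}^{X} ∑_{y = x+1}^{x+H} τ_{2k}(y)^{2k} · τ₂(y)·τ_k(y)² · (1 + X / rad_k(y)) ≤ C · H · (log X)^{𝒞_k}, where log denotes the natural logarithm. -/

import Mathlib

open Finset

/-- `τ_k(n)`: the number of `k`-tuples of positive integers with product `n`. -/
noncomputable def tauNat (k n : ℕ) : ℕ :=
  Nat.card {d : Fin k → ℕ // (∀ i, 0 < d i) ∧ ∏ i, d i = n}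

/-- `rad_k(n)`: the minimum of `lcm(n₁,…,n_k)` over factorizations `n = n₁⋯n_k`
into positive integers. -/
noncomputable def radk (k n : ℕ) : ℕ :=
  sInf {m : ℕ | ∃ d : Fin k → ℕ, (∀ i, 0 < d i) ∧ ∏ i, d i = n ∧ Finset.univ.lcm d = m}

/-- The finset of `k`-tuples of positive integers with product `n`. -/
noncomputable def TT (k n : ℕ) : Finset (Fin k → ℕ) :=
  (Fintype.piFinset fun _ => Finset.Icc 1 n).filter fun d => ∏ i, d i = n

lemma mem_TT {k n : ℕ} (hn : 1 ≤ n) {d : Fin k → ℕ} :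
    d ∈ TT k n ↔ ∏ i, d i = n := by
  constructor
  · intro h; exact (Finset.mem_filter.1 h).2
  · intro h
    refine Finset.mem_filter.2 ⟨Fintype.mem_piFinset.2 fun i => ?_, h⟩
    have hd : d i ∣ n := h ▸ Finset.dvd_prod_of_mem d (mem_univ i)
    exact Finset.mem_Icc.2 ⟨Nat.pos_of_dvd_of_pos hd hn, Nat.le_of_dvd hn hd⟩

lemma tauNat_eq {k n : ℕ} (hn : 1 ≤ n) : tauNat k n = (TT k n).card := by
  have hset : {d : Fin k → ℕ | (∀ i, 0 < d i) ∧ ∏ i, d i = n} = ↑(TT k n) := by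
    ext d
    simp only [Set.mem_setOf_eq, Finset.coe_filter, Set.mem_setOf_eq, mem_coe,
      mem_TT hn]
    constructor
    · rintro ⟨-, h⟩; exact h
    · intro h
      refine ⟨fun i => ?_, h⟩
      exact Nat.pos_of_dvd_of_pos (h ▸ Finset.dvd_prod_of_mem d (mem_univ i)) hn
  rw [tauNat]
  rw [show {d : Fin k → ℕ // (∀ i, 0 < d i) ∧ ∏ i, d i = n}
      = {d : Fin k → ℕ // d ∈ {d : Fin k → ℕ | (∀ i, 0 < d i) ∧ ∏ i, d i = n}} from rfl]
  rw [Nat.card_coe_set_eq, hset, Set.ncard_coe_finset]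

/-- Split a divisor of a product along the factors. -/
lemma exists_factor_tuple : ∀ (b : ℕ) (e : Fin b → ℕ) (d : ℕ), d ∣ ∏ j, e j →
    ∃ g : Fin b → ℕ, (∀ j, g j ∣ e j) ∧ ∏ j, g j = d := by
  intro b
  induction b with
  | zero =>
    intro e d hd
    simp only [Finset.univ_eq_empty, Finset.prod_empty] at hd ⊢
    exact ⟨fun _ => 1, fun j => j.elim0, by simp [Nat.dvd_one.mp hd]⟩
  | succ b ih =>
    intro e d hd
    rw [Fin.prod_univ_succ] at hd
    obtain ⟨u, v, hu, hv, huv⟩ := exists_dvd_and_dvd_of_dvd_mul hd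
    obtain ⟨g', hg', hgp⟩ := ih (fun j => e j.succ) v hv
    refine ⟨Fin.cons u g', fun j => ?_, ?_⟩
    · refine Fin.cases ?_ ?_ j
      · simpa using hu
      · intro i; simpa using hg' i
    · rw [Fin.prod_univ_succ]
      simp only [Fin.cons_zero, Fin.cons_succ]
      rw [hgp, ← huv]

/-- Common refinement matrix for two factorizations of the same number. -/
lemma exists_refinement : ∀ (a : ℕ) {b : ℕ} (d : Fin a → ℕ) (e : Fin b → ℕ),
    (∀ i, 0 < d i) → (∀ j, 0 < e j) → ∏ i, d i = ∏ j, e j →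
    ∃ M : Fin a → Fin b → ℕ, (∀ i, ∏ j, M i j = d i) ∧ (∀ j, ∏ i, M i j = e j) := by
  intro a
  induction a with
  | zero =>
    intro b d e hd he h
    simp only [Finset.univ_eq_empty, Finset.prod_empty] at h
    refine ⟨fun i => i.elim0, fun i => i.elim0, fun j => ?_⟩
    have h1 : e j ∣ (1 : ℕ) := h ▸ Finset.dvd_prod_of_mem e (mem_univ j)
    simp [Nat.dvd_one.mp h1]
  | succ a ih =>
    intro b d e hd he h
    rw [Fin.prod_univ_succ] at h
    have hd0 : d 0 ∣ ∏ j, e j := ⟨∏ i : Fin a, d i.succ, h.symm⟩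
    obtain ⟨g, hg, hgp⟩ := exists_factor_tuple b e (d 0) hd0
    have hgpos : ∀ j, 0 < g j := fun j =>
      Nat.pos_of_ne_zero fun h0 => (he j).ne' (zero_dvd_iff.mp (h0 ▸ hg j))
    have he' : ∀ j, e j = g j * (e j / g j) := fun j => (Nat.mul_div_cancel' (hg j)).symm
    have hprod : ∏ i : Fin a, d i.succ = ∏ j, e j / g j := by
      have h2 : ∏ j, e j = (∏ j, g j) * ∏ j, e j / g j := by
        rw [← Finset.prod_mul_distrib]
        exact Finset.prod_congr rfl fun j _ => he' j
      rw [h2, hgp] at h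
      exact Nat.eq_of_mul_eq_mul_left (hd 0) h
    obtain ⟨M', hM1, hM2⟩ := ih (fun i => d i.succ) (fun j => e j / g j)
      (fun i => hd i.succ) (fun j => Nat.div_pos (Nat.le_of_dvd (he j) (hg j)) (hgpos j)) hprod
    refine ⟨Fin.cons g M', fun i => ?_, fun j => ?_⟩
    · refine Fin.cases ?_ ?_ i
      · simpa using hgp
      · intro i; simpa using hM1 i
    · rw [Fin.prod_univ_succ]
      simp only [Fin.cons_zero, Fin.cons_succ]
      rw [hM2 j, ← he' j]

lemma tauNat_pos {k n : ℕ} (hk : 1 ≤ k) (hn : 1 ≤ n) : 1 ≤ tauNat k n := by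
  rw [tauNat_eq hn]
  obtain ⟨k', rfl⟩ := Nat.exists_eq_succ_of_ne_zero (by omega : k ≠ 0)
  exact Finset.card_pos.2 ⟨Fin.cons n (fun _ => 1), (mem_TT hn).2 (by simp [Fin.prod_univ_succ])⟩

lemma tauNat_succ_mono {k n : ℕ} (hn : 1 ≤ n) : tauNat k n ≤ tauNat (k + 1) n := by
  rw [tauNat_eq hn, tauNat_eq hn]
  apply Finset.card_le_card_of_injOn
    (fun d => (Fin.cons 1 d : Fin (k+1) → ℕ))
  · intro d hd
    rw [Finset.mem_coe, mem_TT hn] at hd ⊢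
    simp [Fin.prod_univ_succ, hd]
  · intro d _ e _ h
    funext i
    have := congrFun h i.succ
    simpa using this

lemma tauNat_mono {a b n : ℕ} (hab : a ≤ b) (hn : 1 ≤ n) : tauNat a n ≤ tauNat b n := by
  induction b with
  | zero => exact (Nat.le_zero.mp hab) ▸ le_rfl
  | succ b ih =>
    rcases Nat.lt_or_ge a (b+1) with h | h
    · exact le_trans (ih (Nat.lt_succ_iff.mp h)) (tauNat_succ_mono hn)
    · exact le_of_eq (congrArg (tauNat · n) (Nat.le_antisymm hab h))

/-- `τ_a(n) · τ_b(n) ≤ τ_{a·b}(n)`. -/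
lemma tauNat_mul_le {a b n : ℕ} (hn : 1 ≤ n) : tauNat a n * tauNat b n ≤ tauNat (a * b) n := by
  rw [tauNat_eq hn, tauNat_eq hn, tauNat_eq hn, ← Finset.card_product]
  classical
  -- to each pair of factorizations associate a refinement matrix
  have key : ∀ p : (Fin a → ℕ) × (Fin b → ℕ), p ∈ (TT a n) ×ˢ (TT b n) →
      ∃ M : Fin a → Fin b → ℕ, (∀ i, ∏ j, M i j = p.1 i) ∧ (∀ j, ∏ i, M i j = p.2 j) := by
    rintro ⟨d, e⟩ hp
    rw [Finset.mem_product, mem_TT hn, mem_TT hn] at hp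
    have hdpos : ∀ i, 0 < d i := fun i => Nat.pos_of_dvd_of_pos
      (hp.1 ▸ Finset.dvd_prod_of_mem d (mem_univ i)) hn
    have hepos : ∀ j, 0 < e j := fun j => Nat.pos_of_dvd_of_pos
      (hp.2 ▸ Finset.dvd_prod_of_mem e (mem_univ j)) hn
    exact exists_refinement a d e hdpos hepos (hp.1.trans hp.2.symm)
  choose M hM1 hM2 using key
  apply Finset.card_le_card_of_injOn
    (fun p => if hp : p ∈ (TT a n) ×ˢ (TT b n) then
      (fun x : Fin (a*b) => M p hp ((finProdFinEquiv.symm x).1) ((finProdFinEquiv.symm x).2))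
      else fun _ => 1)
  · intro p hp
    replace hp : p ∈ (TT a n) ×ˢ (TT b n) := hp
    beta_reduce
    rw [Finset.mem_coe, mem_TT hn, dif_pos hp]
    rw [Equiv.prod_comp finProdFinEquiv.symm (fun q : Fin a × Fin b => M p hp q.1 q.2)]
    rw [Fintype.prod_prod_type]
    calc ∏ i, ∏ j, M p hp i j = ∏ i, p.1 i :=
          Finset.prod_congr rfl fun i _ => hM1 p hp i
      _ = n := (mem_TT hn).1 (Finset.mem_product.mp hp).1
  · intro p hp q hq h
    replace hp : p ∈ (TT a n) ×ˢ (TT b n) := hp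
    replace hq : q ∈ (TT a n) ×ˢ (TT b n) := hq
    simp only at h
    rw [dif_pos hp, dif_pos hq] at h
    have hM : ∀ i j, M p hp i j = M q hq i j := by
      intro i j
      have h' := congrFun h (finProdFinEquiv (i, j))
      simp only [Equiv.symm_apply_apply] at h'
      exact h'
    have h1 : p.1 = q.1 := funext fun i => by
      rw [← hM1 p hp i, ← hM1 q hq i]; exact Finset.prod_congr rfl fun j _ => hM i j
    have h2 : p.2 = q.2 := funext fun j => by
      rw [← hM2 p hp j, ← hM2 q hq j]; exact Finset.prod_congr rfl fun i _ => hM i j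
    exact Prod.ext h1 h2

lemma tauNat_one_le {m : ℕ} : tauNat m 1 ≤ 1 := by
  rw [tauNat_eq le_rfl]
  apply Finset.card_le_one.2
  intro d hd e he
  rw [mem_TT le_rfl] at hd he
  funext i
  have h1 : d i ∣ 1 := hd ▸ Finset.dvd_prod_of_mem d (mem_univ i)
  have h2 : e i ∣ 1 := he ▸ Finset.dvd_prod_of_mem e (mem_univ i)
  rw [Nat.dvd_one.mp h1, Nat.dvd_one.mp h2]

/-- `τ_m(ab) ≤ τ_m(a) · τ_m(b)`. -/
lemma tauNat_submul {m a b : ℕ} (ha : 1 ≤ a) (hb : 1 ≤ b) :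
    tauNat m (a * b) ≤ tauNat m a * tauNat m b := by
  have hab : 1 ≤ a * b := Nat.one_le_iff_ne_zero.2 (Nat.mul_ne_zero (by omega) (by omega))
  rw [tauNat_eq hab, tauNat_eq ha, tauNat_eq hb, ← Finset.card_product]
  classical
  have key : ∀ d : Fin m → ℕ, d ∈ TT m (a * b) →
      ∃ M : Fin m → Fin 2 → ℕ, (∀ i, ∏ j, M i j = d i) ∧
        (∏ i, M i 0 = a ∧ ∏ i, M i 1 = b) := by
    intro d hd
    rw [mem_TT hab] at hd
    have hdpos : ∀ i, 0 < d i := fun i => Nat.pos_of_dvd_of_pos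
      (hd ▸ Finset.dvd_prod_of_mem d (mem_univ i)) hab
    have hepos : ∀ j : Fin 2, 0 < (![a, b]) j := by
      intro j; fin_cases j <;> simp <;> omega
    obtain ⟨M, h1, h2⟩ := exists_refinement m d ![a, b] hdpos hepos
      (by rw [Fin.prod_univ_two]; simpa using hd)
    exact ⟨M, h1, by simpa using h2 0, by simpa using h2 1⟩
  choose M hM1 hM2 using key
  apply Finset.card_le_card_of_injOn
    (fun d => if hd : d ∈ TT m (a * b) then
      ((fun i => M d hd i 0), (fun i => M d hd i 1)) else (d, d))
  · intro d hd
    replace hd : d ∈ TT m (a * b) := hd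
    beta_reduce
    rw [dif_pos hd]
    refine Finset.mem_coe.2 (Finset.mem_product.2 ⟨(mem_TT ha).2 ?_, (mem_TT hb).2 ?_⟩)
    · exact (hM2 d hd).1
    · exact (hM2 d hd).2
  · intro d hd e he h
    replace hd : d ∈ TT m (a * b) := hd
    replace he : e ∈ TT m (a * b) := he
    simp only at h
    rw [dif_pos hd, dif_pos he] at h
    funext i
    have h0 : M d hd i 0 = M e he i 0 := congrFun (congrArg Prod.fst h) i
    have h1 : M d hd i 1 = M e he i 1 := congrFun (congrArg Prod.snd h) i
    rw [← hM1 d hd i, ← hM1 e he i, Fin.prod_univ_two, Fin.prod_univ_two, h0, h1]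

/-- `τ_m(n^t) ≤ τ_m(n)^t`. -/
lemma tauNat_pow_submul {m n : ℕ} (hn : 1 ≤ n) : ∀ t, tauNat m (n ^ t) ≤ tauNat m n ^ t := by
  intro t
  induction t with
  | zero => simpa using tauNat_one_le
  | succ t ih =>
    rw [pow_succ, pow_succ]
    exact le_trans (tauNat_submul (Nat.one_le_pow _ _ hn) hn)
      (Nat.mul_le_mul_right _ ih)

/-- `τ_m(n)^t ≤ τ_{m^t}(n)`. -/
lemma tauNat_pow_le {m n : ℕ} (hn : 1 ≤ n) : ∀ t, tauNat m n ^ t ≤ tauNat (m ^ t) n := by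
  intro t
  induction t with
  | zero => simpa using tauNat_pos le_rfl hn
  | succ t ih =>
    rw [pow_succ, pow_succ]
    exact le_trans (Nat.mul_le_mul_right _ ih) (tauNat_mul_le hn)

/-- `∑_{m ∣ s} τ_M(m) ≤ τ_{M+1}(s)`. -/
lemma sum_tauNat_divisors_le {M s : ℕ} (hs : 1 ≤ s) :
    ∑ m ∈ s.divisors, tauNat M m ≤ tauNat (M + 1) s := by
  classical
  have hcast : ∑ m ∈ s.divisors, tauNat M m = ∑ m ∈ s.divisors, (TT M m).card := by
    refine Finset.sum_congr rfl fun m hm => ?_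
    exact tauNat_eq (Nat.pos_of_mem_divisors hm)
  rw [hcast, tauNat_eq hs, ← Finset.card_sigma]
  apply Finset.card_le_card_of_injOn (fun x => (Fin.cons (s / x.1) x.2 : Fin (M+1) → ℕ))
  · rintro ⟨m, d⟩ hx
    replace hx : (⟨m, d⟩ : Σ _ : ℕ, Fin M → ℕ) ∈ s.divisors.sigma (fun m => TT M m) :=  hx
    rw [Finset.mem_sigma] at hx
    obtain ⟨hm, hd⟩ := hx
    have hm' : m ∣ s := Nat.dvd_of_mem_divisors hm
    have hmpos : 1 ≤ m := Nat.pos_of_mem_divisors hm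
    simp only at hm hd ⊢
    rw [Finset.mem_coe, mem_TT hs, Fin.prod_univ_succ]
    simp only [Fin.cons_zero, Fin.cons_succ]
    rw [(mem_TT hmpos).1 hd, Nat.div_mul_cancel hm']
  · rintro ⟨m, d⟩ hx ⟨m', d'⟩ hx' h
    replace hx : (⟨m, d⟩ : Σ _ : ℕ, Fin M → ℕ) ∈ s.divisors.sigma (fun m => TT M m) := hx
    replace hx' : (⟨m', d'⟩ : Σ _ : ℕ, Fin M → ℕ) ∈ s.divisors.sigma (fun m => TT M m) := hx'
    rw [Finset.mem_sigma] at hx hx'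
    simp only at h
    have hdd : d = d' := by
      funext i
      have := congrFun h i.succ
      simpa using this
    simp only at hx hx'
    have hmm : m = m' := by
      rw [← (mem_TT (Nat.pos_of_mem_divisors hx.1)).1 hx.2,
        ← (mem_TT (Nat.pos_of_mem_divisors hx'.1)).1 hx'.2, hdd]
    subst hdd hmm
    rfl

lemma finset_lcm_dvd_prod {ι : Type*} (s : Finset ι) (f : ι → ℕ) :
    s.lcm f ∣ ∏ i ∈ s, f i := by
  classical
  induction s using Finset.induction_on with
  | empty => simp
  | insert a s hx ih =>
    rw [Finset.lcm_insert, Finset.prod_insert hx]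
    exact lcm_dvd (dvd_mul_right _ _) (dvd_mul_of_dvd_right ih _)

lemma radk_spec {k n : ℕ} (hk : 1 ≤ k) (hn : 1 ≤ n) :
    ∃ d : Fin k → ℕ, (∀ i, 0 < d i) ∧ ∏ i, d i = n ∧ Finset.univ.lcm d = radk k n := by
  have : radk k n ∈ {m : ℕ | ∃ d : Fin k → ℕ,
      (∀ i, 0 < d i) ∧ ∏ i, d i = n ∧ Finset.univ.lcm d = m} := by
    apply Nat.sInf_mem
    obtain ⟨k', rfl⟩ := Nat.exists_eq_succ_of_ne_zero (by omega : k ≠ 0)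
    refine ⟨_, Fin.cons n (fun _ => 1), fun i => ?_, by simp [Fin.prod_univ_succ], rfl⟩
    refine Fin.cases ?_ ?_ i
    · simpa using (show 0 < n from hn)
    · intro j; simp
  exact this

lemma radk_dvd {k n : ℕ} (hk : 1 ≤ k) (hn : 1 ≤ n) : radk k n ∣ n := by
  obtain ⟨d, hpos, hprod, hlcm⟩ := radk_spec hk hn
  rw [← hlcm, ← hprod]
  exact finset_lcm_dvd_prod _ _

lemma radk_pos {k n : ℕ} (hk : 1 ≤ k) (hn : 1 ≤ n) : 1 ≤ radk k n :=
  Nat.pos_of_dvd_of_pos (radk_dvd hk hn) hn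

lemma dvd_radk_pow {k n : ℕ} (hk : 1 ≤ k) (hn : 1 ≤ n) : n ∣ radk k n ^ k := by
  obtain ⟨d, hpos, hprod, hlcm⟩ := radk_spec hk hn
  rw [← hlcm, ← hprod]
  calc ∏ i, d i ∣ ∏ _i : Fin k, Finset.univ.lcm d :=
        Finset.prod_dvd_prod_of_dvd _ _ fun i _ => Finset.dvd_lcm (mem_univ i)
    _ = Finset.univ.lcm d ^ k := by rw [Finset.prod_const, Finset.card_univ, Fintype.card_fin]

lemma harmonic_sum_le (N : ℕ) : ∑ j ∈ Finset.Icc 1 N, (j : ℝ)⁻¹ ≤ 1 + Real.log N := by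
  have h1 : ∑ j ∈ Finset.Icc 1 N, (j : ℝ)⁻¹ = ((harmonic N : ℚ) : ℝ) := by
    rw [harmonic_eq_sum_Icc]
    push_cast
    rfl
  rw [h1]
  exact harmonic_le_one_add_log N

/-- The fundamental bound `∑_{n ≤ N} τ_M(n)/n ≤ (∑_{j ≤ N} 1/j)^M ≤ (1 + log N)^M`. -/
lemma sum_tauNat_div_le (M N : ℕ) :
    ∑ n ∈ Finset.Icc 1 N, (tauNat M n : ℝ) / n ≤ (1 + Real.log N) ^ M := by
  classical
  have step1 : ∑ n ∈ Finset.Icc 1 N, (tauNat M n : ℝ) / n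
      ≤ (∑ j ∈ Finset.Icc 1 N, (j : ℝ)⁻¹) ^ M := by
    have hrw : ∀ n ∈ Finset.Icc 1 N, (tauNat M n : ℝ) / n
        = ∑ d ∈ TT M n, ∏ i, ((d i : ℝ))⁻¹ := by
      intro n hn
      have hn1 : 1 ≤ n := (Finset.mem_Icc.1 hn).1
      rw [tauNat_eq hn1]
      rw [Finset.sum_congr rfl (fun d hd => ?_), Finset.sum_const, nsmul_eq_mul]
      · rw [div_eq_mul_inv]
      · rw [Finset.prod_inv_distrib, ← Nat.cast_prod, (mem_TT hn1).1 hd]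
    rw [Finset.sum_congr rfl hrw]
    have hdisj : (↑(Finset.Icc 1 N) : Set ℕ).PairwiseDisjoint (TT M ·) := by
      intro a _ b _ hab
      refine Finset.disjoint_left.2 fun d hda hdb => hab ?_
      have ha1 : 1 ≤ a := by
        by_contra h
        have : a = 0 := by omega
        subst this
        have := (Finset.mem_filter.1 hda).2
        have hb := (Finset.mem_filter.1 hdb).2
        simp only [TT] at *
        omega
      rw [← (mem_TT ha1).1 hda]
      by_cases hb1 : 1 ≤ b
      · rw [← (mem_TT hb1).1 hdb]
      · exfalso
        have : b = 0 := by omega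
        subst this
        have hprodb := (Finset.mem_filter.1 hdb).2
        rw [(mem_TT ha1).1 hda] at hprodb
        omega
    rw [← Finset.sum_biUnion hdisj]
    have hsub : (Finset.Icc 1 N).biUnion (TT M ·)
        ⊆ Fintype.piFinset fun _ : Fin M => Finset.Icc 1 N := by
      intro d hd
      rw [Finset.mem_biUnion] at hd
      obtain ⟨n, hn, hdn⟩ := hd
      have hn1 : 1 ≤ n := (Finset.mem_Icc.1 hn).1
      have hmem := (Finset.mem_filter.1 hdn).1
      rw [Fintype.mem_piFinset] at hmem ⊢
      intro i
      have := Finset.mem_Icc.1 (hmem i)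
      exact Finset.mem_Icc.2 ⟨this.1, this.2.trans (Finset.mem_Icc.1 hn).2⟩
    calc ∑ d ∈ (Finset.Icc 1 N).biUnion (TT M ·), ∏ i, ((d i : ℝ))⁻¹
        ≤ ∑ d ∈ Fintype.piFinset (fun _ : Fin M => Finset.Icc 1 N), ∏ i, ((d i : ℝ))⁻¹ := by
          refine Finset.sum_le_sum_of_subset_of_nonneg hsub fun d _ _ => ?_
          positivity
      _ = (∑ j ∈ Finset.Icc 1 N, (j : ℝ)⁻¹) ^ M := by
          rw [← Fin.prod_const M (∑ j ∈ Finset.Icc 1 N, (j : ℝ)⁻¹)]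
          rw [Finset.prod_univ_sum]
  refine step1.trans (pow_le_pow_left₀ ?_ (harmonic_sum_le N) M)
  positivity

/-- `∑_{n ≤ N} τ_M(n)/rad_k(n) ≤ (1 + log N)^{M(M+1)^{k-1}}`. -/
lemma sum_tauNat_div_radk_le (k M N : ℕ) (hk : 1 ≤ k) :
    ∑ n ∈ Finset.Icc 1 N, (tauNat M n : ℝ) / (radk k n : ℝ)
      ≤ (1 + Real.log N) ^ (M * (M + 1) ^ (k - 1)) := by
  classical
  set M' := M * (M + 1) ^ (k - 1) with hM'
  have hmaps : ∀ n ∈ Finset.Icc 1 N, radk k n ∈ Finset.Icc 1 N := by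
    intro n hn
    obtain ⟨h1, h2⟩ := Finset.mem_Icc.1 hn
    exact Finset.mem_Icc.2 ⟨radk_pos hk h1, (Nat.le_of_dvd h1 (radk_dvd hk h1)).trans h2⟩
  rw [← Finset.sum_fiberwise_of_maps_to hmaps (fun n => (tauNat M n : ℝ) / (radk k n : ℝ))]
  have fiber_bound : ∀ r ∈ Finset.Icc 1 N,
      ∑ n ∈ (Finset.Icc 1 N).filter (fun n => radk k n = r),
        (tauNat M n : ℝ) / (radk k n : ℝ) ≤ (tauNat M' r : ℝ) / r := by
    intro r hr
    obtain ⟨hr1, hrN⟩ := Finset.mem_Icc.1 hr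
    have hr0 : (0 : ℝ) < r := by exact_mod_cast hr1
    have hrne : r ≠ 0 := by omega
    set fib := (Finset.Icc 1 N).filter (fun n => radk k n = r) with hfib
    have hstep : ∀ n ∈ fib, (tauNat M n : ℝ) / (radk k n : ℝ)
        ≤ (tauNat M r : ℝ) * (tauNat M (n / r) : ℝ) / r := by
      intro n hn
      rw [hfib, Finset.mem_filter] at hn
      obtain ⟨hn', hrad⟩ := hn
      obtain ⟨h1, _⟩ := Finset.mem_Icc.1 hn'
      have hrdvd : r ∣ n := hrad ▸ radk_dvd hk h1
      have hq1 : 1 ≤ n / r := (Nat.one_le_div_iff (by omega)).2 (Nat.le_of_dvd h1 hrdvd)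
      have hτ : tauNat M n ≤ tauNat M r * tauNat M (n / r) := by
        have := tauNat_submul (m := M) hr1 hq1
        rwa [Nat.mul_div_cancel' hrdvd] at this
      rw [hrad]
      rw [div_le_div_iff_of_pos_right hr0]
      exact_mod_cast hτ
    have hinj : Set.InjOn (· / r) ↑fib := by
      intro x hx y hy hxy
      simp only [hfib, Finset.coe_filter, Set.mem_setOf_eq] at hx hy
      have hdx : r ∣ x := hx.2 ▸ radk_dvd hk (Finset.mem_Icc.1 hx.1).1
      have hdy : r ∣ y := hy.2 ▸ radk_dvd hk (Finset.mem_Icc.1 hy.1).1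
      simp only at hxy
      rw [← Nat.mul_div_cancel' hdx, ← Nat.mul_div_cancel' hdy, hxy]
    have hsub : fib.image (· / r) ⊆ (r ^ (k - 1)).divisors := by
      intro m hm
      rw [Finset.mem_image] at hm
      obtain ⟨n, hn, rfl⟩ := hm
      rw [hfib, Finset.mem_filter] at hn
      obtain ⟨hn', hrad⟩ := hn
      have h1 : 1 ≤ n := (Finset.mem_Icc.1 hn').1
      have hrdvd : r ∣ n := hrad ▸ radk_dvd hk h1
      have hpow : n ∣ r ^ k := hrad ▸ dvd_radk_pow hk h1
      have hk' : r ^ k = r * r ^ (k - 1) := by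
        rw [← pow_succ']
        congr 1
        omega
      rw [hk', ← Nat.mul_div_cancel' hrdvd] at hpow
      refine Nat.mem_divisors.2 ⟨?_, pow_ne_zero _ hrne⟩
      exact (mul_dvd_mul_iff_left (by exact_mod_cast hrne : (r:ℕ) ≠ 0)).1 hpow
    have hNat : tauNat M r * (∑ m ∈ (r ^ (k - 1)).divisors, tauNat M m) ≤ tauNat M' r := by
      calc tauNat M r * (∑ m ∈ (r ^ (k - 1)).divisors, tauNat M m)
          ≤ tauNat M r * tauNat (M + 1) (r ^ (k - 1)) :=
            Nat.mul_le_mul_left _ (sum_tauNat_divisors_le (Nat.one_le_pow _ _ hr1))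
        _ ≤ tauNat M r * tauNat (M + 1) r ^ (k - 1) :=
            Nat.mul_le_mul_left _ (tauNat_pow_submul hr1 _)
        _ ≤ tauNat M r * tauNat ((M + 1) ^ (k - 1)) r :=
            Nat.mul_le_mul_left _ (tauNat_pow_le hr1 _)
        _ ≤ tauNat (M * (M + 1) ^ (k - 1)) r := tauNat_mul_le hr1
    calc ∑ n ∈ fib, (tauNat M n : ℝ) / (radk k n : ℝ)
        ≤ ∑ n ∈ fib, (tauNat M r : ℝ) * (tauNat M (n / r) : ℝ) / r :=
          Finset.sum_le_sum hstep
      _ = ∑ m ∈ fib.image (· / r), (tauNat M r : ℝ) * (tauNat M m : ℝ) / r :=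
          (Finset.sum_image (f := fun m => (tauNat M r : ℝ) * (tauNat M m : ℝ) / ↑r)
            (fun x hx y hy h => hinj hx hy h)).symm
      _ ≤ ∑ m ∈ (r ^ (k - 1)).divisors, (tauNat M r : ℝ) * (tauNat M m : ℝ) / r := by
          refine Finset.sum_le_sum_of_subset_of_nonneg hsub fun m _ _ => ?_
          positivity
      _ = (tauNat M r : ℝ) * (∑ m ∈ (r ^ (k - 1)).divisors, (tauNat M m : ℝ)) / r := by
          rw [Finset.mul_sum, Finset.sum_div]
      _ ≤ (tauNat M' r : ℝ) / r := by
          rw [div_le_div_iff_of_pos_right hr0]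
          exact_mod_cast hNat
  calc ∑ r ∈ Finset.Icc 1 N, ∑ n ∈ (Finset.Icc 1 N).filter (fun n => radk k n = r),
        (tauNat M n : ℝ) / (radk k n : ℝ)
      ≤ ∑ r ∈ Finset.Icc 1 N, (tauNat M' r : ℝ) / r := Finset.sum_le_sum fiber_bound
    _ ≤ (1 + Real.log N) ^ M' := sum_tauNat_div_le M' N

lemma swap_bound (X H : ℕ) (hH : H ≤ X) (g : ℕ → ℝ) (hg : ∀ y, 0 ≤ g y) :
    ∑ x ∈ Finset.Icc 1 X, ∑ y ∈ Finset.Ioc x (x + H), g y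
      ≤ (H : ℝ) * ∑ y ∈ Finset.Icc 1 (2 * X), g y := by
  classical
  have h1 : ∀ x ∈ Finset.Icc 1 X, Finset.Ioc x (x + H) ⊆ Finset.Icc 1 (2 * X) := by
    intro x hx y hy
    rw [Finset.mem_Icc] at hx ⊢
    rw [Finset.mem_Ioc] at hy
    omega
  calc ∑ x ∈ Finset.Icc 1 X, ∑ y ∈ Finset.Ioc x (x + H), g y
      = ∑ x ∈ Finset.Icc 1 X, ∑ y ∈ Finset.Icc 1 (2 * X),
          (if y ∈ Finset.Ioc x (x + H) then g y else 0) :=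
        (Finset.sum_congr rfl fun x hx => by
          rw [Finset.sum_ite_mem, Finset.inter_eq_right.2 (h1 x hx)]).symm
    _ = ∑ y ∈ Finset.Icc 1 (2 * X), ∑ x ∈ Finset.Icc 1 X,
          (if y ∈ Finset.Ioc x (x + H) then g y else 0) := Finset.sum_comm
    _ ≤ ∑ y ∈ Finset.Icc 1 (2 * X), (H : ℝ) * g y := by
        refine Finset.sum_le_sum fun y _ => ?_
        have hcount : ((Finset.Icc 1 X).filter (fun x => y ∈ Finset.Ioc x (x + H))).card ≤ H := by
          have hsub : (Finset.Icc 1 X).filter (fun x => y ∈ Finset.Ioc x (x + H))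
              ⊆ Finset.Ico (y - H) y := by
            intro x hx
            rw [Finset.mem_filter, Finset.mem_Icc, Finset.mem_Ioc] at hx
            rw [Finset.mem_Ico]
            omega
          calc _ ≤ (Finset.Ico (y - H) y).card := Finset.card_le_card hsub
            _ = y - (y - H) := Nat.card_Ico _ _
            _ ≤ H := by omega
        rw [Finset.sum_ite, Finset.sum_const, Finset.sum_const_zero, add_zero, nsmul_eq_mul]
        exact mul_le_mul_of_nonneg_right (by exact_mod_cast hcount) (hg y)
    _ = (H : ℝ) * ∑ y ∈ Finset.Icc 1 (2 * X), g y := (Finset.mul_sum _ _ _).symm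

/-- Pointwise bound on the divisor-function weight. -/
lemma weight_le {k y : ℕ} (hk : 1 ≤ k) (hy : 1 ≤ y) :
    tauNat (2 * k) y ^ (2 * k) * tauNat 2 y * tauNat k y ^ 2
      ≤ tauNat ((2 * k) ^ (2 * k + 3)) y := by
  have h2 : tauNat 2 y ≤ tauNat (2 * k) y := tauNat_mono (by omega) hy
  have hkk : tauNat k y ≤ tauNat (2 * k) y := tauNat_mono (by omega) hy
  calc tauNat (2 * k) y ^ (2 * k) * tauNat 2 y * tauNat k y ^ 2
      ≤ tauNat (2 * k) y ^ (2 * k) * tauNat (2 * k) y * tauNat (2 * k) y ^ 2 := by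
        exact Nat.mul_le_mul (Nat.mul_le_mul_left _ h2) (Nat.pow_le_pow_left hkk 2)
    _ = tauNat (2 * k) y ^ (2 * k + 3) := by ring
    _ ≤ tauNat ((2 * k) ^ (2 * k + 3)) y := tauNat_pow_le hy _

/-- for every `k ≥ 1` there are constants `𝒞_k > 0`, `C > 0` and a
threshold `X₀` such that for all integers `X ≥ X₀` and `1 ≤ H ≤ X`:
`(1/X) ∑_{x=1}^{X} ∑_{y=x+1}^{x+H} τ_{2k}(y)^{2k}·τ₂(y)·τ_k(y)²·(1 + X/rad_k(y))
  ≤ C · H · (log X)^{𝒞_k}`. -/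
theorem stmt16 (k : ℕ) (hk : 1 ≤ k) :
    ∃ Ck : ℕ, 0 < Ck ∧ ∃ C : ℝ, 0 < C ∧ ∃ X₀ : ℕ, ∀ X H : ℕ, X₀ ≤ X → 1 ≤ H → H ≤ X →
      (1 / (X : ℝ)) * ∑ x ∈ Finset.Icc 1 X, ∑ y ∈ Finset.Ioc x (x + H),
          (tauNat (2 * k) y : ℝ) ^ (2 * k) * (tauNat 2 y : ℝ) * (tauNat k y : ℝ) ^ 2 *
            (1 + (X : ℝ) / (radk k y : ℝ))
        ≤ C * (H : ℝ) * Real.log X ^ Ck := by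
  set M : ℕ := (2 * k) ^ (2 * k + 3) with hM
  set M' : ℕ := M * (M + 1) ^ (k - 1) with hM'
  have hMpos : 0 < M := pow_pos (by omega) _
  have hM'pos : 0 < M' := Nat.mul_pos hMpos (pow_pos (by omega) _)
  have hMM' : M ≤ M' := Nat.le_mul_of_pos_right M (pow_pos (by omega) _)
  refine ⟨M', hM'pos, 3 * 2 ^ M', by positivity, 8, ?_⟩
  intro X H hX hH1 hHX
  set g : ℕ → ℝ := fun y =>
    (tauNat (2 * k) y : ℝ) ^ (2 * k) * (tauNat 2 y : ℝ) * (tauNat k y : ℝ) ^ 2 *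
      (1 + (X : ℝ) / (radk k y : ℝ)) with hg
  have hgnonneg : ∀ y, 0 ≤ g y := fun y => by positivity
  have hXpos : (0:ℝ) < X := by exact_mod_cast (by omega : 0 < X)
  have h2X1 : (1:ℝ) ≤ ((2 * X : ℕ) : ℝ) := by exact_mod_cast (by omega : 1 ≤ 2 * X)
  have hlog2Xnn : (0:ℝ) ≤ Real.log ((2 * X : ℕ) : ℝ) := Real.log_nonneg h2X1
  have base1 : (1:ℝ) ≤ 1 + Real.log ((2 * X : ℕ) : ℝ) := by linarith
  have hswap := swap_bound X H hHX g hgnonneg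
  -- pointwise bound by τ_M
  have hpt : ∀ y ∈ Finset.Icc 1 (2 * X), g y
      ≤ (tauNat M y : ℝ) * (1 + (X : ℝ) / (radk k y : ℝ)) := by
    intro y hy
    have hy1 : 1 ≤ y := (Finset.mem_Icc.1 hy).1
    have hfac : (0:ℝ) ≤ 1 + (X : ℝ) / (radk k y : ℝ) := by positivity
    refine mul_le_mul_of_nonneg_right ?_ hfac
    exact_mod_cast weight_le hk hy1
  -- sum of τ_M over Icc 1 2X
  have hsum1 : ∑ y ∈ Finset.Icc 1 (2 * X), (tauNat M y : ℝ)
      ≤ 2 * (X:ℝ) * (1 + Real.log ((2 * X : ℕ) : ℝ)) ^ M := by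
    calc ∑ y ∈ Finset.Icc 1 (2 * X), (tauNat M y : ℝ)
        ≤ ∑ y ∈ Finset.Icc 1 (2 * X), (2 * (X:ℝ)) * ((tauNat M y : ℝ) / y) := by
          refine Finset.sum_le_sum fun y hy => ?_
          obtain ⟨hy1, hy2⟩ := Finset.mem_Icc.1 hy
          have hy0 : (0:ℝ) < y := by exact_mod_cast hy1
          calc (tauNat M y : ℝ) = (y:ℝ) * ((tauNat M y : ℝ) / y) := by field_simp
            _ ≤ (2 * (X:ℝ)) * ((tauNat M y : ℝ) / y) := by
                refine mul_le_mul_of_nonneg_right ?_ (by positivity)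
                exact_mod_cast hy2
      _ = (2 * (X:ℝ)) * ∑ y ∈ Finset.Icc 1 (2 * X), (tauNat M y : ℝ) / y :=
          (Finset.mul_sum _ _ _).symm
      _ ≤ 2 * (X:ℝ) * (1 + Real.log ((2 * X : ℕ) : ℝ)) ^ M := by
          refine mul_le_mul_of_nonneg_left (sum_tauNat_div_le M (2 * X)) (by positivity)
  have hsum2 := sum_tauNat_div_radk_le k M (2 * X) hk
  -- total sum bound
  have hsum : ∑ y ∈ Finset.Icc 1 (2 * X), g y
      ≤ 3 * (X:ℝ) * (1 + Real.log ((2 * X : ℕ) : ℝ)) ^ M' := by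
    have hpow : (1 + Real.log ((2 * X : ℕ) : ℝ)) ^ M
        ≤ (1 + Real.log ((2 * X : ℕ) : ℝ)) ^ M' := pow_le_pow_right₀ base1 hMM'
    calc ∑ y ∈ Finset.Icc 1 (2 * X), g y
        ≤ ∑ y ∈ Finset.Icc 1 (2 * X), (tauNat M y : ℝ) * (1 + (X : ℝ) / (radk k y : ℝ)) :=
          Finset.sum_le_sum hpt
      _ = (∑ y ∈ Finset.Icc 1 (2 * X), (tauNat M y : ℝ))
          + (X:ℝ) * ∑ y ∈ Finset.Icc 1 (2 * X), (tauNat M y : ℝ) / (radk k y : ℝ) := by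
          rw [Finset.mul_sum, ← Finset.sum_add_distrib]
          refine Finset.sum_congr rfl fun y hy => ?_
          ring
      _ ≤ 2 * (X:ℝ) * (1 + Real.log ((2 * X : ℕ) : ℝ)) ^ M
          + (X:ℝ) * (1 + Real.log ((2 * X : ℕ) : ℝ)) ^ M' := by
          refine add_le_add hsum1 (mul_le_mul_of_nonneg_left hsum2 (le_of_lt hXpos))
      _ ≤ 3 * (X:ℝ) * (1 + Real.log ((2 * X : ℕ) : ℝ)) ^ M' := by nlinarith
  -- log comparison: 1 + log (2X) ≤ 2 log X
  have hX8 : (8:ℝ) ≤ X := by exact_mod_cast hX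
  have hlogX : 1 + Real.log 2 ≤ Real.log X := by
    have h4 : (1:ℝ) ≤ Real.log 4 := by
      rw [Real.le_log_iff_exp_le (by norm_num)]
      exact le_of_lt (lt_trans Real.exp_one_lt_d9 (by norm_num))
    have h8 : Real.log 8 = Real.log 4 + Real.log 2 := by
      rw [← Real.log_mul (by norm_num) (by norm_num)]
      norm_num
    have := Real.log_le_log (by norm_num : (0:ℝ) < 8) hX8
    linarith
  have hlogXpos : 0 < Real.log X := by
    have : (0:ℝ) ≤ Real.log 2 := Real.log_nonneg (by norm_num)
    linarith
  have hcomp : 1 + Real.log ((2 * X : ℕ) : ℝ) ≤ 2 * Real.log X := by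
    have : Real.log ((2 * X : ℕ) : ℝ) = Real.log 2 + Real.log X := by
      push_cast
      rw [Real.log_mul (by norm_num) (ne_of_gt hXpos)]
    linarith
  -- final assembly
  have hHnn : (0:ℝ) ≤ H := by positivity
  calc (1 / (X : ℝ)) * ∑ x ∈ Finset.Icc 1 X, ∑ y ∈ Finset.Ioc x (x + H), g y
      ≤ (1 / (X : ℝ)) * ((H : ℝ) * ∑ y ∈ Finset.Icc 1 (2 * X), g y) := by
        refine mul_le_mul_of_nonneg_left hswap (by positivity)
    _ ≤ (1 / (X : ℝ)) * ((H : ℝ) * (3 * (X:ℝ) * (1 + Real.log ((2 * X : ℕ) : ℝ)) ^ M')) := by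
        refine mul_le_mul_of_nonneg_left (mul_le_mul_of_nonneg_left hsum hHnn) (by positivity)
    _ = 3 * (H : ℝ) * (1 + Real.log ((2 * X : ℕ) : ℝ)) ^ M' := by
        field_simp
    _ ≤ 3 * (H : ℝ) * (2 * Real.log X) ^ M' := by
        refine mul_le_mul_of_nonneg_left (pow_le_pow_left₀ (by linarith) hcomp M') (by positivity)
    _ = 3 * 2 ^ M' * (H : ℝ) * Real.log X ^ M' := by
        rw [mul_pow]
        ring
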